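/- Let k ≥ 1 and r ≥ 0 be integers and Q₁, …, Q_k ∈ ℂ[z] polynomials with deg Qᵢ ≤ i + r for 1 ≤ i ≤ k and deg Q_k = k + r. Let n ≥ 1 and suppose 𝔏_n ≠ 𝔏_j for all j = 0, 1, …, n−1. Let V ∈ ℂ[z] with deg V ≤ r whose coefficient of z^r equals −𝔏_n. Then every nonzero polynomial S ∈ ℂ[z] with deg S ≤ n satisfying Σ_{i=1}^k Qᵢ·S^{(i)} + V·S = 0 has degree exactly n, and any two nonzero such solutions are scalar multiples of one another. -/

import Mathlib

open Polynomial

/-- The `n`-th diagonal coefficient `𝔏ₙ = Σ_{i=1}^k n(n−1)⋯(n−i+1)·Aᵢ`,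
where `Aᵢ` is the coefficient of `z^{i+r}` in `Qᵢ`. -/
noncomputable def diagCoeff (k r : ℕ) (Q : ℕ → Polynomial ℂ) (n : ℕ) : ℂ :=
  ∑ i ∈ Finset.Icc 1 k, (n.descFactorial i : ℂ) * (Q i).coeff (i + r)

lemma key_coeff (k r : ℕ) (Q : ℕ → Polynomial ℂ)
    (hdeg : ∀ i, 1 ≤ i → i ≤ k → (Q i).degree ≤ (i + r : ℕ))
    (V : Polynomial ℂ) (hV : V.degree ≤ (r : ℕ)) (S : Polynomial ℂ) :
    (∑ i ∈ Finset.Icc 1 k, Q i * (Polynomial.derivative^[i] S) + V * S).coeff (S.natDegree + r)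
      = (diagCoeff k r Q S.natDegree + V.coeff r) * S.coeff S.natDegree := by
  classical
  set m := S.natDegree with hm
  rw [Polynomial.coeff_add, Polynomial.finset_sum_coeff]
  have hsum : ∀ i ∈ Finset.Icc 1 k,
      (Q i * Polynomial.derivative^[i] S).coeff (m + r)
        = (m.descFactorial i : ℂ) * (Q i).coeff (i + r) * S.coeff m := by
    intro i hi
    obtain ⟨hi1, hik⟩ := Finset.mem_Icc.mp hi
    by_cases h : i ≤ m
    · have h1 : m + r = (i + r) + (m - i) := by omega
      rw [h1, coeff_mul_add_eq_of_natDegree_le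
        (natDegree_le_iff_degree_le.mpr (hdeg i hi1 hik))
        ((natDegree_iterate_derivative S i).trans (by omega)),
        coeff_iterate_derivative]
      have h2 : m - i + i = m := by omega
      rw [h2, nsmul_eq_mul]
      ring
    · rw [iterate_derivative_eq_zero (by omega), mul_zero, Polynomial.coeff_zero,
        Nat.descFactorial_eq_zero_iff_lt.mpr (by omega)]
      simp
  have hVS : (V * S).coeff (m + r) = V.coeff r * S.coeff m := by
    rw [show m + r = r + m from add_comm m r,
      coeff_mul_add_eq_of_natDegree_le (natDegree_le_iff_degree_le.mpr hV) le_rfl]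
  rw [Finset.sum_congr rfl hsum, hVS, diagCoeff, add_mul, Finset.sum_mul]

theorem stmt_5 (k r : ℕ) (hk : 1 ≤ k) (Q : ℕ → Polynomial ℂ)
    (hdeg : ∀ i, 1 ≤ i → i ≤ k → (Q i).degree ≤ (i + r : ℕ))
    (hQk : (Q k).degree = (k + r : ℕ))
    (n : ℕ) (hn : 1 ≤ n)
    (hnonres : ∀ j < n, diagCoeff k r Q n ≠ diagCoeff k r Q j)
    (V : Polynomial ℂ) (hV : V.degree ≤ (r : ℕ))
    (hVr : V.coeff r = -diagCoeff k r Q n) :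
    (∀ S : Polynomial ℂ, S ≠ 0 → S.natDegree ≤ n →
      ∑ i ∈ Finset.Icc 1 k, Q i * (Polynomial.derivative^[i] S) + V * S = 0 →
      S.natDegree = n) ∧
    (∀ S₁ S₂ : Polynomial ℂ, S₁ ≠ 0 → S₂ ≠ 0 →
      S₁.natDegree ≤ n → S₂.natDegree ≤ n →
      ∑ i ∈ Finset.Icc 1 k, Q i * (Polynomial.derivative^[i] S₁) + V * S₁ = 0 →
      ∑ i ∈ Finset.Icc 1 k, Q i * (Polynomial.derivative^[i] S₂) + V * S₂ = 0 →
      ∃ c : ℂ, S₂ = c • S₁) := by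
  have part1 : ∀ S : Polynomial ℂ, S ≠ 0 → S.natDegree ≤ n →
      ∑ i ∈ Finset.Icc 1 k, Q i * (Polynomial.derivative^[i] S) + V * S = 0 →
      S.natDegree = n := by
    intro S hS hSn heq
    by_contra hne
    have hlt : S.natDegree < n := lt_of_le_of_ne hSn hne
    have h0 := key_coeff k r Q hdeg V hV S
    rw [heq, Polynomial.coeff_zero] at h0
    have hc : S.coeff S.natDegree ≠ 0 := mt Polynomial.leadingCoeff_eq_zero.mp hS
    have hz : diagCoeff k r Q S.natDegree + V.coeff r = 0 := by
      rcases mul_eq_zero.mp h0.symm with h | h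
      · exact h
      · exact absurd h hc
    rw [hVr] at hz
    exact hnonres _ hlt (add_neg_eq_zero.mp hz).symm
  refine ⟨part1, ?_⟩
  intro S₁ S₂ h1 h2 hd1 hd2 he1 he2
  have hn1 : S₁.natDegree = n := part1 _ h1 hd1 he1
  have hc1 : S₁.coeff n ≠ 0 := by
    rw [← hn1]; exact mt Polynomial.leadingCoeff_eq_zero.mp h1
  set c := S₂.coeff n / S₁.coeff n with hc
  refine ⟨c, ?_⟩
  by_contra hne
  set T := S₂ - c • S₁ with hT
  have hT0 : T ≠ 0 := sub_ne_zero.mpr hne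
  have hTdeg : T.natDegree ≤ n :=
    le_trans (Polynomial.natDegree_sub_le _ _)
      (max_le hd2 (le_trans (Polynomial.natDegree_smul_le _ _) hd1))
  have hlin : ∑ i ∈ Finset.Icc 1 k, Q i * (Polynomial.derivative^[i] T) + V * T
      = (∑ i ∈ Finset.Icc 1 k, Q i * (Polynomial.derivative^[i] S₂) + V * S₂)
        - c • (∑ i ∈ Finset.Icc 1 k, Q i * (Polynomial.derivative^[i] S₁) + V * S₁) := by
    simp only [hT, Polynomial.iterate_derivative_sub, Polynomial.iterate_derivative_smul,
      mul_sub, Finset.sum_sub_distrib, smul_add, smul_sub, Finset.smul_sum, mul_smul_comm]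
    ring
  rw [he1, he2, smul_zero, sub_zero] at hlin
  have hTn : T.natDegree = n := part1 T hT0 hTdeg hlin
  have hcoeff : T.coeff n = 0 := by
    rw [hT]
    simp only [Polynomial.coeff_sub, Polynomial.coeff_smul, smul_eq_mul, hc]
    field_simp
    simp
  have hlc : T.coeff T.natDegree ≠ 0 := mt Polynomial.leadingCoeff_eq_zero.mp hT0
  rw [hTn] at hlc
  exact hlc hcoeff
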